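/- Let T : ℝⁿ → ℝⁿ be a homeomorphism such that T(c·x) = c·T(x) for all real c ≥ 0 and all x ∈ ℝⁿ, and such that T restricts to a bijection of the integer lattice ℤⁿ onto itself. Then for every bounded open convex set Ω ⊆ ℝⁿ containing 0, λ(T(Ω)) = λ(Ω), where λ is n-dimensional Lebesgue measure. -/

import Mathlib

open MeasureTheory Metric Set Filter
open scoped ENNReal Pointwise

namespace LatticeHomeoVolAux

variable {n : ℕ}

/-- Cast a lattice point to `ℝⁿ`. -/
noncomputable def lat (z : Fin n → ℤ) : Fin n → ℝ := fun i => (z i : ℝ)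

lemma lat_injective : Function.Injective (lat (n := n)) := fun a b h => by
  funext i
  have := congrFun h i
  simp only [lat] at this
  exact_mod_cast this

/-- Half-open cube of side `1/(k+1)` with corner `(1/(k+1)) • lat z`. -/
def Q (k : ℕ) (z : Fin n → ℤ) : Set (Fin n → ℝ) :=
  univ.pi fun i => Ico ((z i : ℝ) / ((k : ℝ) + 1)) ((z i : ℝ) / ((k : ℝ) + 1) + 1 / ((k : ℝ) + 1))

/-- Corner of the cube. -/
noncomputable def corner (k : ℕ) (z : Fin n → ℤ) : Fin n → ℝ :=
  fun i => (z i : ℝ) / ((k : ℝ) + 1)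

lemma corner_eq_smul (k : ℕ) (z : Fin n → ℤ) :
    corner k z = (((k : ℝ) + 1))⁻¹ • lat z := by
  funext i
  simp [corner, lat, div_eq_inv_mul]

lemma kpos (k : ℕ) : (0 : ℝ) < (k : ℝ) + 1 := by positivity

lemma mem_Q_iff {k : ℕ} {z : Fin n → ℤ} {x : Fin n → ℝ} :
    x ∈ Q k z ↔ ∀ i, ⌊((k : ℝ) + 1) * x i⌋ = z i := by
  have hκ := kpos k
  rw [Q, Set.mem_univ_pi]
  refine forall_congr' fun i => ?_
  rw [Set.mem_Ico, Int.floor_eq_iff]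
  constructor
  · rintro ⟨h1, h2⟩
    constructor
    · rw [div_le_iff₀ hκ] at h1; linarith [h1]
    · rw [← add_div, lt_div_iff₀ hκ] at h2; push_cast; linarith [h2]
  · rintro ⟨h1, h2⟩
    constructor
    · rw [div_le_iff₀ hκ]; linarith [h1]
    · rw [← add_div, lt_div_iff₀ hκ]; push_cast at h2 ⊢; linarith [h2]

lemma Q_disjoint (k : ℕ) :
    Set.univ.PairwiseDisjoint (Q (n := n) k) := by
  intro z _ w _ hzw
  refine Set.disjoint_left.2 fun x hxz hxw => hzw ?_
  funext i
  rw [← (mem_Q_iff.1 hxz) i, ← (mem_Q_iff.1 hxw) i]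

lemma Q_measurable (k : ℕ) (z : Fin n → ℤ) : MeasurableSet (Q k z) :=
  MeasurableSet.univ_pi fun _ => measurableSet_Ico

lemma volume_Q (k : ℕ) (z : Fin n → ℤ) :
    volume (Q k z) = (ENNReal.ofReal (1 / ((k : ℝ) + 1))) ^ n := by
  rw [Q, volume_pi_pi]
  simp [Real.volume_Ico]

lemma mem_Q_floor (k : ℕ) (x : Fin n → ℝ) :
    x ∈ Q k (fun i => ⌊((k : ℝ) + 1) * x i⌋) :=
  mem_Q_iff.2 fun _ => rfl

lemma dist_corner_le {k : ℕ} {z : Fin n → ℤ} {x : Fin n → ℝ} (hx : x ∈ Q k z) :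
    dist x (corner k z) ≤ 1 / ((k : ℝ) + 1) := by
  have hκ := kpos k
  rw [dist_pi_le_iff (by positivity)]
  intro i
  have h := (Set.mem_univ_pi.1 hx) i
  rw [Set.mem_Ico] at h
  rw [Real.dist_eq, abs_le]
  constructor
  · simp only [corner]; linarith [h.1, h.2, (by positivity : (0:ℝ) < 1 / ((k:ℝ)+1))]
  · simp only [corner]; linarith [h.1, h.2]

lemma dist_corner_lt {k : ℕ} {z : Fin n → ℤ} {x : Fin n → ℝ} (hx : x ∈ Q k z) :
    dist x (corner k z) < 1 / ((k : ℝ) + 1) := by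
  have hκ := kpos k
  rw [dist_pi_lt_iff (by positivity)]
  intro i
  have h := (Set.mem_univ_pi.1 hx) i
  rw [Set.mem_Ico] at h
  rw [Real.dist_eq, abs_lt]
  constructor
  · simp only [corner]; linarith [h.1, h.2, (by positivity : (0:ℝ) < 1 / ((k:ℝ)+1))]
  · simp only [corner]; linarith [h.1, h.2]

/-- Lattice points (rescaled by `1/(k+1)`) lying in `s`. -/
def Zset (k : ℕ) (s : Set (Fin n → ℝ)) : Set (Fin n → ℤ) :=
  {z | corner k z ∈ s}

lemma Zset_finite (k : ℕ) {s : Set (Fin n → ℝ)} (hs : Bornology.IsBounded s) :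
    (Zset k s).Finite := by
  obtain ⟨R, hR⟩ := hs.subset_closedBall 0
  have hκ := kpos k
  refine Set.Finite.subset
    (Set.Finite.pi (t := fun _ : Fin n => Set.Icc (-(⌈((k : ℝ) + 1) * R⌉)) ⌈((k : ℝ) + 1) * R⌉)
      fun _ => Set.finite_Icc _ _) ?_
  intro z hz
  rw [Set.mem_univ_pi]
  intro i
  have h1 : ‖corner k z‖ ≤ R := by
    have := hR hz
    rwa [Metric.mem_closedBall, dist_zero_right] at this
  have h3 : |(z i : ℝ)| ≤ ((k : ℝ) + 1) * R := by
    have h := (norm_le_pi_norm (corner k z) i).trans h1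
    simp only [corner, Real.norm_eq_abs, abs_div, abs_of_pos hκ] at h
    rw [div_le_iff₀ hκ] at h
    linarith
  rw [abs_le] at h3
  have hc : ((k : ℝ) + 1) * R ≤ (⌈((k : ℝ) + 1) * R⌉ : ℝ) := Int.le_ceil _
  constructor
  · exact_mod_cast (by linarith [h3.1, hc] : (-(⌈((k : ℝ) + 1) * R⌉ : ℝ)) ≤ (z i : ℝ))
  · exact_mod_cast (le_trans h3.2 hc)

lemma volume_biUnion (k : ℕ) {s : Set (Fin n → ℝ)} (hfin : (Zset k s).Finite) :
    volume (⋃ z ∈ Zset k s, Q k z) =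
      ((Zset k s).ncard : ℝ≥0∞) * (ENNReal.ofReal (1 / ((k : ℝ) + 1))) ^ n := by
  have h1 : (⋃ z ∈ Zset k s, Q k z) = ⋃ z ∈ hfin.toFinset, Q k z := by
    ext x; simp [Set.Finite.mem_toFinset]
  rw [h1, measure_biUnion_finset ((Q_disjoint k).subset (Set.subset_univ _))
    (fun z _ => Q_measurable k z)]
  simp only [volume_Q, Finset.sum_const, nsmul_eq_mul]
  rw [Set.ncard_eq_toFinset_card _ hfin]

lemma shrink_subset_biUnion (k : ℕ) (u : Set (Fin n → ℝ)) :
    {x | closedBall x (1 / ((k : ℝ) + 1)) ⊆ u} ⊆ ⋃ z ∈ Zset k u, Q k z := by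
  intro x hx
  set z : Fin n → ℤ := fun i => ⌊((k : ℝ) + 1) * x i⌋ with hz
  have hxQ : x ∈ Q k z := mem_Q_floor k x
  have hcu : corner k z ∈ u := by
    apply hx
    rw [Metric.mem_closedBall, dist_comm]
    exact dist_corner_le hxQ
  exact Set.mem_biUnion hcu hxQ

lemma biUnion_subset_thickening (k : ℕ) (s : Set (Fin n → ℝ)) :
    (⋃ z ∈ Zset k s, Q k z) ⊆ thickening (1 / ((k : ℝ) + 1)) s := by
  intro x hx
  obtain ⟨z, hz, hxQ⟩ := Set.mem_iUnion₂.1 hx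
  exact Metric.mem_thickening_iff.2 ⟨corner k z, hz, dist_corner_lt hxQ⟩

/-- The key counting bijection: the cardinality of rescaled lattice points in `T '' s`
equals that in `s`. -/
lemma ncard_Zset_image (T : (Fin n → ℝ) ≃ₜ (Fin n → ℝ))
    (hhom : ∀ c : ℝ, 0 ≤ c → ∀ x, T (c • x) = c • T x)
    (hlat : T '' Set.range (lat (n := n)) = Set.range (lat (n := n)))
    (k : ℕ) (s : Set (Fin n → ℝ)) :
    (Zset k (T '' s)).ncard = (Zset k s).ncard := by
  have hg : ∀ z : Fin n → ℤ, ∃ w, lat w = T (lat z) := by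
    intro z
    have : T (lat z) ∈ T '' Set.range (lat (n := n)) :=
      Set.mem_image_of_mem _ ⟨z, rfl⟩
    rw [hlat] at this
    obtain ⟨w, hw⟩ := this
    exact ⟨w, hw⟩
  set g : (Fin n → ℤ) → (Fin n → ℤ) := fun z => (hg z).choose with hgdef
  have hgspec : ∀ z, lat (g z) = T (lat z) := fun z => (hg z).choose_spec
  have hginj : Function.Injective g := by
    intro a b hab
    apply lat_injective
    apply T.injective
    rw [← hgspec, ← hgspec, hab]
  have hcorner : ∀ z, corner k (g z) = T (corner k z) := by
    intro z
    have hκ : (0 : ℝ) ≤ (((k : ℝ) + 1))⁻¹ := by positivity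
    rw [corner_eq_smul, corner_eq_smul, hgspec, hhom _ hκ]
  have hEq : Zset k (T '' s) = g '' Zset k s := by
    ext w
    constructor
    · intro hw
      have hw' : corner k w ∈ T '' s := hw
      have : lat w ∈ Set.range (lat (n := n)) := ⟨w, rfl⟩
      rw [← hlat] at this
      obtain ⟨y, ⟨z, rfl⟩, hy⟩ := this
      have hgz : g z = w := lat_injective (by rw [hgspec, hy])
      refine ⟨z, ?_, hgz⟩
      have : corner k (g z) ∈ T '' s := by rwa [hgz]
      rw [hcorner] at this
      exact T.injective.mem_set_image.1 this
    · rintro ⟨z, hz, rfl⟩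
      show corner k (g z) ∈ T '' s
      rw [hcorner]
      exact Set.mem_image_of_mem _ hz
  rw [hEq, Set.ncard_image_of_injective _ hginj]

lemma iUnion_shrink (u : Set (Fin n → ℝ)) :
    (⋃ k : ℕ, {x | closedBall x (1 / ((k : ℝ) + 1)) ⊆ u}) = interior u := by
  ext x
  rw [Set.mem_iUnion]
  constructor
  · rintro ⟨k, hk⟩
    rw [mem_interior_iff_mem_nhds]
    exact Filter.mem_of_superset (Metric.closedBall_mem_nhds x (by positivity)) hk
  · intro hx
    rw [mem_interior_iff_mem_nhds, Metric.mem_nhds_iff] at hx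
    obtain ⟨ε, hε, hball⟩ := hx
    obtain ⟨k, hk⟩ := exists_nat_one_div_lt hε
    exact ⟨k, (Metric.closedBall_subset_ball hk).trans hball⟩

lemma iInter_thickening (s : Set (Fin n → ℝ)) :
    (⋂ k : ℕ, thickening (1 / ((k : ℝ) + 1)) s) = closure s := by
  ext x
  rw [Set.mem_iInter]
  constructor
  · intro hx
    rw [Metric.mem_closure_iff]
    intro ε hε
    obtain ⟨k, hk⟩ := exists_nat_one_div_lt hε
    obtain ⟨y, hy, hdy⟩ := Metric.mem_thickening_iff.1 (hx k)
    exact ⟨y, hy, hdy.trans hk⟩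
  · intro hx k
    rw [Metric.mem_closure_iff] at hx
    obtain ⟨y, hy, hdy⟩ := hx (1 / ((k : ℝ) + 1)) (by positivity)
    exact Metric.mem_thickening_iff.2 ⟨y, hy, hdy⟩

/-- Master inequality. -/
lemma volume_interior_image_le (T : (Fin n → ℝ) ≃ₜ (Fin n → ℝ))
    (hhom : ∀ c : ℝ, 0 ≤ c → ∀ x, T (c • x) = c • T x)
    (hlat : T '' Set.range (lat (n := n)) = Set.range (lat (n := n)))
    (s : Set (Fin n → ℝ)) (hs : Bornology.IsBounded s) :
    volume (interior (T '' s)) ≤ volume (closure s) := by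
  have hTs : Bornology.IsBounded (T '' s) := by
    have hc : IsCompact (closure s) := hs.isCompact_closure
    exact (hc.image T.continuous).isBounded.subset
      (Set.image_mono subset_closure)
  -- the key per-scale inequality
  have key : ∀ k : ℕ, volume {x | closedBall x (1 / ((k : ℝ) + 1)) ⊆ T '' s} ≤
      volume (thickening (1 / ((k : ℝ) + 1)) s) := by
    intro k
    calc volume {x | closedBall x (1 / ((k : ℝ) + 1)) ⊆ T '' s}
        ≤ volume (⋃ z ∈ Zset k (T '' s), Q k z) :=
          measure_mono (shrink_subset_biUnion k (T '' s))
      _ = ((Zset k (T '' s)).ncard : ℝ≥0∞) * (ENNReal.ofReal (1 / ((k : ℝ) + 1))) ^ n :=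
          volume_biUnion k (Zset_finite k hTs)
      _ = ((Zset k s).ncard : ℝ≥0∞) * (ENNReal.ofReal (1 / ((k : ℝ) + 1))) ^ n := by
          rw [ncard_Zset_image T hhom hlat]
      _ = volume (⋃ z ∈ Zset k s, Q k z) := (volume_biUnion k (Zset_finite k hs)).symm
      _ ≤ volume (thickening (1 / ((k : ℝ) + 1)) s) :=
          measure_mono (biUnion_subset_thickening k s)
  -- monotonicity facts
  have hmono : ∀ {j k : ℕ}, j ≤ k →
      (1 / ((k : ℝ) + 1)) ≤ (1 / ((j : ℝ) + 1)) := by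
    intro j k hjk
    apply one_div_le_one_div_of_le (by positivity)
    have : (j : ℝ) ≤ (k : ℝ) := Nat.cast_le.2 hjk
    linarith
  have hU : volume (interior (T '' s)) =
      ⨆ k : ℕ, volume {x | closedBall x (1 / ((k : ℝ) + 1)) ⊆ T '' s} := by
    rw [← iUnion_shrink (T '' s)]
    apply Directed.measure_iUnion
    apply Monotone.directed_le
    intro j k hjk x hx
    exact (Metric.closedBall_subset_closedBall (hmono hjk)).trans hx
  have hI : volume (closure s) = ⨅ k : ℕ, volume (thickening (1 / ((k : ℝ) + 1)) s) := by
    rw [← iInter_thickening s]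
    apply Directed.measure_iInter
    · exact fun k => Metric.isOpen_thickening.measurableSet.nullMeasurableSet
    · apply Antitone.directed_ge
      intro j k hjk
      exact Metric.thickening_mono (hmono hjk) s
    · refine ⟨0, ?_⟩
      have : Bornology.IsBounded (thickening (1 / ((0 : ℝ) + 1)) s) := hs.thickening
      simpa using this.measure_lt_top.ne
  rw [hU, hI]
  refine iSup_le fun m => le_iInf fun j => ?_
  set K : ℕ := max m j with hK
  calc volume {x | closedBall x (1 / ((m : ℝ) + 1)) ⊆ T '' s}
      ≤ volume {x | closedBall x (1 / ((K : ℝ) + 1)) ⊆ T '' s} := by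
        apply measure_mono
        intro x hx
        exact (Metric.closedBall_subset_closedBall (hmono (le_max_left m j))).trans hx
    _ ≤ volume (thickening (1 / ((K : ℝ) + 1)) s) := key K
    _ ≤ volume (thickening (1 / ((j : ℝ) + 1)) s) :=
        measure_mono (Metric.thickening_mono (hmono (le_max_right m j)) s)

/-- For a bounded star-shaped-ish set, the closure has the same volume. -/
lemma volume_closure_eq (S : Set (Fin n → ℝ)) (hb : Bornology.IsBounded S)
    (hc : ∀ c : ℝ, 0 < c → c < 1 → c • closure S ⊆ S) :
    volume (closure S) = volume S := by
  refine le_antisymm ?_ (measure_mono subset_closure)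
  have key : ∀ m : ℕ, volume (closure S) ≤
      ENNReal.ofReal ((((m : ℝ) + 2) / ((m : ℝ) + 1)) ^ n) * volume S := by
    intro m
    set c : ℝ := ((m : ℝ) + 1) / ((m : ℝ) + 2) with hcdef
    have h0 : (0 : ℝ) < c := by positivity
    have h1 : c < 1 := by
      rw [hcdef, div_lt_one (by positivity)]; linarith
    have hcinv : c⁻¹ = ((m : ℝ) + 2) / ((m : ℝ) + 1) := by
      rw [hcdef, inv_div]
    have hsub : closure S ⊆ c⁻¹ • S := by
      intro x hx
      refine ⟨c • x, hc c h0 h1 (Set.smul_mem_smul_set hx), ?_⟩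
      show c⁻¹ • c • x = x
      rw [smul_smul, inv_mul_cancel₀ (ne_of_gt h0), one_smul]
    calc volume (closure S) ≤ volume (c⁻¹ • S) := measure_mono hsub
      _ = ENNReal.ofReal |c⁻¹ ^ Module.finrank ℝ (Fin n → ℝ)| * volume S :=
          Measure.addHaar_smul volume c⁻¹ S
      _ = ENNReal.ofReal ((((m : ℝ) + 2) / ((m : ℝ) + 1)) ^ n) * volume S := by
          rw [Module.finrank_fin_fun, hcinv, abs_of_pos (by positivity)]
  have hS : volume S ≠ ⊤ := hb.measure_lt_top.ne
  have hten : Tendsto (fun m : ℕ =>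
      ENNReal.ofReal ((((m : ℝ) + 2) / ((m : ℝ) + 1)) ^ n) * volume S) atTop (nhds (volume S)) := by
    have h1 : Tendsto (fun m : ℕ => (((m : ℝ) + 2) / ((m : ℝ) + 1)) ^ n) atTop (nhds 1) := by
      have h2 : Tendsto (fun m : ℕ => ((m : ℝ) + 2) / ((m : ℝ) + 1)) atTop (nhds 1) := by
        have h3 : (fun m : ℕ => ((m : ℝ) + 2) / ((m : ℝ) + 1)) =
            fun m : ℕ => 1 + 1 / ((m : ℝ) + 1) := by
          funext m
          field_simp
          ring
        rw [h3]
        have := tendsto_one_div_add_atTop_nhds_zero_nat (𝕜 := ℝ)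
        simpa using (tendsto_const_nhds (x := (1 : ℝ))).add this
      simpa using h2.pow n
    have h4 : Tendsto (fun m : ℕ =>
        ENNReal.ofReal ((((m : ℝ) + 2) / ((m : ℝ) + 1)) ^ n)) atTop (nhds 1) := by
      simpa using (ENNReal.tendsto_ofReal h1)
    simpa using ENNReal.Tendsto.mul_const h4 (Or.inr hS)
  exact ge_of_tendsto' hten key

end LatticeHomeoVolAux

open LatticeHomeoVolAux

/-- A homeomorphism of `ℝⁿ` that commutes with nonnegative scaling and restricts to a
bijection of the integer lattice onto itself preserves the Lebesgue measure of every
bounded open convex set containing the origin. -/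
theorem volume_image_eq_of_lattice_homeo (n : ℕ)
    (T : (Fin n → ℝ) ≃ₜ (Fin n → ℝ))
    (hhom : ∀ c : ℝ, 0 ≤ c → ∀ x, T (c • x) = c • T x)
    (hlat : T '' (Set.range fun z : Fin n → ℤ => fun i => (z i : ℝ)) =
      Set.range fun z : Fin n → ℤ => fun i => (z i : ℝ)) :
    ∀ Ω : Set (Fin n → ℝ), IsOpen Ω → Convex ℝ Ω → Bornology.IsBounded Ω → 0 ∈ Ω →
      volume (T '' Ω) = volume Ω := by
  intro Ω hopen hconv hbdd h0
  have hlat' : T '' Set.range (lat (n := n)) = Set.range (lat (n := n)) := hlat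
  -- star-shapedness of Ω
  have hclΩ : ∀ c : ℝ, 0 < c → c < 1 → c • closure Ω ⊆ Ω := by
    intro c h0c h1c x hx
    obtain ⟨y, hy, rfl⟩ := hx
    have h0' : (0 : Fin n → ℝ) ∈ interior Ω := by rw [hopen.interior_eq]; exact h0
    have := hconv.combo_interior_closure_mem_interior h0' hy
      (by linarith : (0:ℝ) < 1 - c) (le_of_lt h0c) (by ring)
    rw [smul_zero, zero_add, hopen.interior_eq] at this
    exact this
  -- boundedness of T '' Ω
  have hbT : Bornology.IsBounded (T '' Ω) := by
    have hc : IsCompact (closure Ω) := hbdd.isCompact_closure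
    exact (hc.image T.continuous).isBounded.subset (Set.image_mono subset_closure)
  -- star-shapedness of T '' Ω
  have hclT : ∀ c : ℝ, 0 < c → c < 1 → c • closure (T '' Ω) ⊆ T '' Ω := by
    intro c h0c h1c x hx
    rw [← T.image_closure] at hx
    obtain ⟨_, ⟨y, hy, rfl⟩, rfl⟩ := hx
    show c • T y ∈ T '' Ω
    rw [← hhom c (le_of_lt h0c)]
    exact Set.mem_image_of_mem _ (hclΩ c h0c h1c (Set.smul_mem_smul_set hy))
  -- hypotheses for T.symm
  have hhom' : ∀ c : ℝ, 0 ≤ c → ∀ x, T.symm (c • x) = c • T.symm x := by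
    intro c hc x
    apply T.injective
    rw [T.apply_symm_apply, hhom c hc, T.apply_symm_apply]
  have hlatSymm : T.symm '' Set.range (lat (n := n)) = Set.range (lat (n := n)) := by
    conv_lhs => rw [← hlat']
    ext x
    simp [Set.mem_image]
  have hTsymmT : T.symm '' (T '' Ω) = Ω := by
    ext x
    simp [Set.mem_image]
  -- inequality 1
  have h1 : volume (T '' Ω) ≤ volume Ω := by
    calc volume (T '' Ω) = volume (interior (T '' Ω)) := by
          rw [(T.isOpen_image.2 hopen).interior_eq]
      _ ≤ volume (closure Ω) := volume_interior_image_le T hhom hlat' Ω hbdd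
      _ = volume Ω := volume_closure_eq Ω hbdd hclΩ
  -- inequality 2
  have h2 : volume Ω ≤ volume (T '' Ω) := by
    have hm := volume_interior_image_le T.symm hhom' hlatSymm (T '' Ω) hbT
    rw [hTsymmT] at hm
    calc volume Ω = volume (interior Ω) := by rw [hopen.interior_eq]
      _ ≤ volume (closure (T '' Ω)) := hm
      _ = volume (T '' Ω) := volume_closure_eq _ hbT hclT
  exact le_antisymm h1 h2
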